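/- Let n be a natural number with 4 ∤ n and n ≢ 7 (mod 8). Then for every natural number H with H ≥ 3, the partial sum ∑_{h=0}^{H} A(2^h; n) is at least 2^{−6}. -/

import Mathlib

open Finset

/-- `e z = exp(2 π i z)`. -/
noncomputable def e (z : ℝ) : ℂ := Complex.exp (2 * Real.pi * Complex.I * z)

/-- The quadratic Gauss sum `S(q,a) = ∑_{r=1}^{q} e(a r² / q)`. -/
noncomputable def S (q : ℕ) (a : ℤ) : ℂ :=
  ∑ r ∈ Finset.Icc 1 q, e ((a : ℝ) * (r : ℝ) ^ 2 / (q : ℝ))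

/-- `A(q;n) = ∑_{1 ≤ a ≤ q, gcd(a,q)=1} q⁻³ S(q,a)³ e(-n a / q)` (so `A(1;n)=1`). -/
noncomputable def A (q n : ℕ) : ℂ :=
  ∑ a ∈ (Finset.Icc 1 q).filter (fun a => Nat.gcd a q = 1),
    (q : ℂ) ^ (-(3 : ℤ)) * S q (a : ℤ) ^ 3 * e (-((n : ℝ) * (a : ℝ) / (q : ℝ)))

/-! ### Basic properties of `e` -/

lemma e_add (x y : ℝ) : e (x + y) = e x * e y := by
  simp only [e]; rw [← Complex.exp_add]; push_cast; ring_nf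

lemma e_int (k : ℤ) : e k = 1 := by
  simp only [e]
  rw [show 2 * (Real.pi:ℂ) * Complex.I * (k:ℝ) = k * (2 * Real.pi * Complex.I) by push_cast; ring]
  exact Complex.exp_int_mul_two_pi_mul_I k

lemma e_nat (k : ℕ) : e k = 1 := by exact_mod_cast e_int k

lemma e_zero : e 0 = 1 := by simpa using e_nat 0

lemma e_add_int (x : ℝ) (k : ℤ) : e (x + k) = e x := by rw [e_add, e_int, mul_one]

lemma e_half : e (1/2) = -1 := by
  simp only [e]
  rw [show 2 * (Real.pi:ℂ) * Complex.I * ((1:ℝ)/2 : ℝ) = Real.pi * Complex.I by push_cast; ring]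
  exact Complex.exp_pi_mul_I

lemma e_quarter : e (1/4) = Complex.I := by
  simp only [e]
  rw [show 2 * (Real.pi:ℂ) * Complex.I * ((1:ℝ)/4 : ℝ) = (Real.pi:ℂ)/2 * Complex.I by push_cast; ring]
  rw [Complex.exp_mul_I, Complex.cos_pi_div_two, Complex.sin_pi_div_two]
  ring

lemma e_nat_mul (t : ℕ) (x : ℝ) : e (t * x) = (e x) ^ t := by
  simp only [e]
  rw [show 2 * (Real.pi:ℂ) * Complex.I * ((t:ℝ) * x : ℝ) = t * (2 * Real.pi * Complex.I * x) by push_cast; ring]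
  exact Complex.exp_nat_mul _ t

lemma e_eq_one_iff (x : ℝ) : e x = 1 ↔ ∃ k : ℤ, x = k := by
  simp only [e]
  rw [Complex.exp_eq_one_iff]
  constructor
  · rintro ⟨k, hk⟩
    refine ⟨k, ?_⟩
    have hne : (2 * (Real.pi:ℂ) * Complex.I) ≠ 0 := by
      simp [Real.pi_ne_zero, Complex.I_ne_zero]
    have : (x:ℂ) = k := by
      apply mul_left_cancel₀ hne
      rw [hk]; ring
    exact_mod_cast this
  · rintro ⟨k, hk⟩
    exact ⟨k, by rw [hk]; push_cast; ring⟩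

lemma e_eq_of (x y : ℝ) (k : ℤ) (h : x = y + k) : e x = e y := by rw [h, e_add_int]

lemma e_eq_mul_of (x y : ℝ) (c : ℂ) (w : ℝ) (k : ℤ) (hx : x = (y + w) + k) (hw : e w = c) :
    e x = c * e y := by rw [hx, e_add_int, e_add, hw, mul_comm]

lemma e_half_odd (m : ℕ) (hm : m % 2 = 1) : e ((m:ℝ)/2) = -1 := by
  obtain ⟨w, hw⟩ := Nat.odd_iff.mpr hm
  rw [show (m:ℝ)/2 = 1/2 + (w:ℤ) by rw [hw]; push_cast; ring, e_add_int, e_half]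

lemma e_one_eq : e 1 = 1 := by rw [e_eq_of 1 0 1 (by norm_num), e_zero]

lemma e_34 : e (3/4) = -Complex.I := by
  rw [show (3:ℝ)/4 = 1/4 + 1/2 by norm_num, e_add, e_quarter, e_half]; ring
lemma e_m14 : e (-(1/4)) = -Complex.I := by
  rw [e_eq_of (-(1/4)) (3/4) (-1) (by norm_num), e_34]
lemma e_m34 : e (-(3/4)) = Complex.I := by
  rw [e_eq_of (-(3/4)) (1/4) (-1) (by norm_num), e_quarter]
lemma e_m12 : e (-(1/2)) = -1 := by
  rw [e_eq_of (-(1/2)) (1/2) (-1) (by norm_num), e_half]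

lemma e_pow3 (x : ℝ) : (e x)^3 = e (3*x) := by
  rw [show (3:ℝ)*x = ((3:ℕ):ℝ)*x by norm_num, e_nat_mul]

lemma e_add_half (x : ℝ) : e (x + 1/2) = - e x := by rw [e_add, e_half]; ring

/-! ### Summation helpers -/

lemma sum_Icc_two_mul (M : ℕ) (f : ℕ → ℂ) :
    ∑ r ∈ Icc 1 (2*M), f r = ∑ j ∈ range M, (f (2*j+1) + f (2*j+2)) := by
  induction M with
  | zero => simp
  | succ M ih =>
    rw [show 2*(M+1) = (2*M+1)+1 by ring, Finset.sum_Icc_succ_top (by omega),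
      Finset.sum_Icc_succ_top (by omega), Finset.sum_range_succ, ih]
    ring_nf

lemma sum_Icc_odd (M : ℕ) (f : ℕ → ℂ) :
    ∑ r ∈ (Icc 1 (2*M)).filter (fun r => r % 2 = 1), f r = ∑ j ∈ range M, f (2*j+1) := by
  rw [Finset.sum_filter, sum_Icc_two_mul]
  congr 1; funext j
  norm_num [Nat.add_mod, Nat.mul_mod]

/-! ### The odd Gauss subsum vanishes modulo `2^(k+4)` -/

lemma key_shift (k a : ℕ) (ha : a % 2 = 1) (j : ℕ) :
    e ((a:ℝ) * (2*((2^(k+1):ℕ) + (j:ℝ))+1)^2 / (2:ℝ)^(k+4)) =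
      - e ((a:ℝ) * (2*(j:ℝ)+1)^2 / (2:ℝ)^(k+4)) := by
  have hP : (2:ℝ)^k ≠ 0 := by positivity
  have harg : (a:ℝ) * (2*((2^(k+1):ℕ) + (j:ℝ))+1)^2 / (2:ℝ)^(k+4)
      = (a:ℝ) * (2*(j:ℝ)+1)^2 / (2:ℝ)^(k+4)
        + ((a*(2*j+1) : ℕ):ℝ)/2 + ((a*2^k : ℕ) : ℤ) := by
    push_cast
    rw [show (2:ℝ)^(k+1) = 2^k*2 by ring, show (2:ℝ)^(k+4) = 2^k*16 by ring]
    field_simp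
    ring
  rw [harg, e_add_int, e_add, e_half_odd _ (by rw [Nat.mul_mod, ha]; omega), mul_neg_one]

lemma sum_quarter_vanish (G : ℕ → ℂ) (k : ℕ) (hshift : ∀ x : ℕ, G (2^(k+1) + x) = - G x) :
    ∑ j ∈ range (2^(k+3)), G j = 0 := by
  rw [show (2:ℕ)^(k+3) = 2^(k+1) + (2^(k+1) + (2^(k+1) + 2^(k+1))) by ring]
  simp only [Finset.sum_range_add]
  simp only [hshift, neg_neg]
  simp [Finset.sum_neg_distrib]

lemma oddsum_vanish (k a : ℕ) (ha : a % 2 = 1) :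
    ∑ j ∈ range (2^(k+3)), e ((a:ℝ) * (2*(j:ℝ)+1)^2 / (2:ℝ)^(k+4)) = 0 := by
  apply sum_quarter_vanish (fun j => e ((a:ℝ) * (2*(j:ℝ)+1)^2 / (2:ℝ)^(k+4))) k
  intro x
  show e ((a:ℝ) * (2*((2^(k+1)+x : ℕ):ℝ)+1)^2 / (2:ℝ)^(k+4)) = - e ((a:ℝ) * (2*(x:ℝ)+1)^2 / (2:ℝ)^(k+4))
  rw [show ((a:ℝ) * (2*((2^(k+1)+x : ℕ):ℝ)+1)^2 / (2:ℝ)^(k+4))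
      = (a:ℝ) * (2*(((2^(k+1):ℕ):ℝ) + (x:ℝ))+1)^2 / (2:ℝ)^(k+4) by push_cast; ring]
  exact key_shift k a ha x

/-! ### Shift invariance of `S(2^(k+4), ·)` -/

lemma S_shift (k : ℕ) (a : ℕ) (ha : a % 2 = 1) :
    S (2^(k+4)) ((a : ℤ) + 2^(k+2)) = S (2^(k+4)) (a : ℤ) := by
  unfold S
  rw [show (2:ℕ)^(k+4) = 2 * 2^(k+3) by ring]
  rw [sum_Icc_two_mul, sum_Icc_two_mul]
  have hL : ∀ j ∈ range (2^(k+3)),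
      (e ((((a:ℤ) + 2^(k+2) : ℤ):ℝ) * ((2*j+1 : ℕ):ℝ)^2 / ((2*2^(k+3) : ℕ):ℝ))
       + e ((((a:ℤ) + 2^(k+2) : ℤ):ℝ) * ((2*j+2 : ℕ):ℝ)^2 / ((2*2^(k+3) : ℕ):ℝ)))
      = Complex.I * e ((a:ℝ) * (2*(j:ℝ)+1)^2 / (2:ℝ)^(k+4))
        + e ((a:ℝ) * (2*(j:ℝ)+2)^2 / (2:ℝ)^(k+4)) := by
    intro j _
    congr 1
    · refine e_eq_mul_of _ _ _ (1/4) ((j^2+j : ℕ) : ℤ) ?_ e_quarter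
      push_cast
      rw [show (2:ℝ)^(k+2) = 2^k*4 by ring, show (2:ℝ)^(k+3) = 2^k*8 by ring,
        show (2:ℝ)^(k+4) = 2^k*16 by ring]
      have hP : (2:ℝ)^k ≠ 0 := by positivity
      field_simp
      ring
    · refine e_eq_of _ _ ((j^2+2*j+1 : ℕ) : ℤ) ?_
      push_cast
      rw [show (2:ℝ)^(k+2) = 2^k*4 by ring, show (2:ℝ)^(k+3) = 2^k*8 by ring,
        show (2:ℝ)^(k+4) = 2^k*16 by ring]
      have hP : (2:ℝ)^k ≠ 0 := by positivity
      field_simp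
      ring
  have hR : ∀ j ∈ range (2^(k+3)),
      (e (((a:ℤ):ℝ) * ((2*j+1 : ℕ):ℝ)^2 / ((2*2^(k+3) : ℕ):ℝ))
       + e (((a:ℤ):ℝ) * ((2*j+2 : ℕ):ℝ)^2 / ((2*2^(k+3) : ℕ):ℝ)))
      = e ((a:ℝ) * (2*(j:ℝ)+1)^2 / (2:ℝ)^(k+4))
        + e ((a:ℝ) * (2*(j:ℝ)+2)^2 / (2:ℝ)^(k+4)) := by
    intro j _
    congr 1 <;>
    · apply e_eq_of _ _ 0
      push_cast
      rw [show (2:ℝ)^(k+3) = 2^k*8 by ring, show (2:ℝ)^(k+4) = 2^k*16 by ring]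
      ring
  rw [Finset.sum_congr rfl hL, Finset.sum_congr rfl hR,
    Finset.sum_add_distrib, Finset.sum_add_distrib, ← Finset.mul_sum,
    oddsum_vanish k a ha, mul_zero, zero_add]

lemma S_shift_t (k : ℕ) (a : ℕ) (ha : a % 2 = 1) (t : ℕ) :
    S (2^(k+4)) ((a + 2^(k+2)*t : ℕ) : ℤ) = S (2^(k+4)) (a : ℤ) := by
  induction t with
  | zero => norm_num
  | succ t ih =>
    have hpar : (a + 2^(k+2)*t) % 2 = 1 := by
      obtain ⟨c, hc⟩ : 2 ∣ 2^(k+2)*t := Dvd.dvd.mul_right (dvd_pow_self 2 (by omega)) t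
      omega
    have h1 : ((a + 2^(k+2)*(t+1) : ℕ) : ℤ) = ((a + 2^(k+2)*t : ℕ) : ℤ) + 2^(k+2) := by
      push_cast; ring
    rw [h1, S_shift k (a + 2^(k+2)*t) hpar, ih]

lemma sum_quarter_factor (G : ℕ → ℂ) (ω : ℂ) (k : ℕ)
    (hshift : ∀ x : ℕ, G (2^(k+1) + x) = ω * G x) (hω : 1 + ω + ω^2 + ω^3 = 0) :
    ∑ j ∈ range (2^(k+3)), G j = 0 := by
  rw [show (2:ℕ)^(k+3) = 2^(k+1) + (2^(k+1) + (2^(k+1) + 2^(k+1))) by ring]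
  simp only [Finset.sum_range_add]
  simp only [hshift]
  simp only [← Finset.mul_sum]
  linear_combination (∑ j ∈ range (2^(k+1)), G j) * hω

lemma geom4 (ω : ℂ) (h4 : ω^4 = 1) (h1 : ω ≠ 1) : 1 + ω + ω^2 + ω^3 = 0 := by
  have h : (ω - 1) * (1 + ω + ω^2 + ω^3) = 0 := by linear_combination h4
  rcases mul_eq_zero.mp h with h' | h'
  · exact absurd (sub_eq_zero.mp h') h1
  · exact h'

/-! ### Vanishing of `A(2^h; n)` for `h ≥ 4` when `4 ∤ n` -/

lemma A_vanish (k n : ℕ) (h4 : ¬ 4 ∣ n) : A (2^(k+4)) n = 0 := by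
  have hω4 : (e (-(n:ℝ)/4))^4 = 1 := by
    rw [← e_nat_mul 4 (-(n:ℝ)/4)]
    rw [e_eq_of _ 0 (-(n:ℤ)) (by push_cast; ring), e_zero]
  have hω1 : e (-(n:ℝ)/4) ≠ 1 := by
    intro hcon
    obtain ⟨m, hm⟩ := (e_eq_one_iff _).mp hcon
    have : (n:ℤ) = -4*m := by
      have : -(n:ℝ) = 4*m := by linarith [hm]
      exact_mod_cast (by push_cast; linarith : ((n:ℤ):ℝ) = ((-4*m : ℤ):ℝ))
    have : (4:ℤ) ∣ (n:ℤ) := ⟨-m, by omega⟩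
    exact h4 (by exact_mod_cast this)
  have hω : 1 + e (-(n:ℝ)/4) + (e (-(n:ℝ)/4))^2 + (e (-(n:ℝ)/4))^3 = 0 :=
    geom4 _ hω4 hω1
  unfold A
  rw [show (2:ℕ)^(k+4) = 2 * 2^(k+3) by ring]
  have hfilter : (Icc 1 (2*2^(k+3))).filter (fun a => Nat.gcd a (2*2^(k+3)) = 1)
      = (Icc 1 (2*2^(k+3))).filter (fun a => a % 2 = 1) := by
    apply Finset.filter_congr
    intro a _
    rw [show (2:ℕ)*2^(k+3) = 2^(k+4) by ring]
    rw [show Nat.gcd a (2^(k+4)) = 1 ↔ Nat.Coprime a (2^(k+4)) from Iff.rfl]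
    rw [Nat.coprime_pow_right_iff (by omega), Nat.coprime_two_right, Nat.odd_iff]
  rw [hfilter, sum_Icc_odd]
  apply sum_quarter_factor _ (e (-(n:ℝ)/4)) k _ hω
  intro x
  have hS : S (2*2^(k+3)) ((2*(2^(k+1)+x)+1 : ℕ) : ℤ) = S (2*2^(k+3)) ((2*x+1 : ℕ) : ℤ) := by
    rw [show (2:ℕ)*2^(k+3) = 2^(k+4) by ring]
    rw [show ((2*(2^(k+1)+x)+1 : ℕ) : ℤ) = (((2*x+1) + 2^(k+2)*1 : ℕ) : ℤ) by push_cast; ring]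
    exact S_shift_t k (2*x+1) (by omega) 1
  rw [hS]
  have he : e (-((n:ℝ) * ((2*(2^(k+1)+x)+1 : ℕ):ℝ) / ((2*2^(k+3) : ℕ):ℝ)))
      = e (-(n:ℝ)/4) * e (-((n:ℝ) * ((2*x+1 : ℕ):ℝ) / ((2*2^(k+3) : ℕ):ℝ))) := by
    apply e_eq_mul_of _ _ _ (-(n:ℝ)/4) (-(n*(2^(k+1)+x) : ℕ) + (n*x + n*2^(k+1) : ℕ) : ℤ) _ rfl
    push_cast
    rw [show (2:ℝ)^(k+1) = 2^k*2 by ring, show (2:ℝ)^(k+3) = 2^k*8 by ring]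
    have hP : (2:ℝ)^k ≠ 0 := by positivity
    field_simp
    ring
  rw [he]
  ring

/-! ### The small cases -/

lemma A_one (n : ℕ) : A 1 n = 1 := by
  unfold A S
  rw [show (Finset.Icc 1 1).filter (fun a => Nat.gcd a 1 = 1) = {1} from by decide]
  rw [Finset.sum_singleton, Finset.Icc_self, Finset.sum_singleton]
  rw [e_eq_of _ 0 1 (by push_cast; ring), e_zero]
  rw [e_eq_of (-((n:ℝ) * _ / _)) 0 (-(n:ℤ)) (by push_cast; ring), e_zero]
  norm_num

lemma A_two (n : ℕ) : A 2 n = 0 := by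
  unfold A
  rw [show (Finset.Icc 1 2).filter (fun a => Nat.gcd a 2 = 1) = {1} from by decide]
  rw [Finset.sum_singleton]
  have hS : S 2 ((1:ℕ):ℤ) = 0 := by
    unfold S
    rw [show Finset.Icc 1 2 = {1, 2} from by decide]
    rw [Finset.sum_insert (by decide), Finset.sum_singleton]
    rw [e_eq_of (_ * ((1:ℕ):ℝ)^2 / _) (1/2) 0 (by push_cast; norm_num)]
    rw [e_eq_of (_ * ((2:ℕ):ℝ)^2 / _) 0 2 (by push_cast; norm_num)]
    rw [e_half, e_zero]
    ring
  rw [hS]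
  ring

lemma S_four_one : S 4 ((1:ℕ):ℤ) = 2 + 2*Complex.I := by
  unfold S
  rw [show Finset.Icc 1 4 = {1, 2, 3, 4} from by decide]
  rw [Finset.sum_insert (by decide), Finset.sum_insert (by decide),
    Finset.sum_insert (by decide), Finset.sum_singleton]
  rw [e_eq_of (_ * ((1:ℕ):ℝ)^2 / _) (1/4) 0 (by push_cast; norm_num)]
  rw [e_eq_of (_ * ((2:ℕ):ℝ)^2 / _) 0 1 (by push_cast; norm_num)]
  rw [e_eq_of (_ * ((3:ℕ):ℝ)^2 / _) (1/4) 2 (by push_cast; norm_num)]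
  rw [e_eq_of (_ * ((4:ℕ):ℝ)^2 / _) 0 4 (by push_cast; norm_num)]
  rw [e_quarter, e_zero]
  ring

lemma S_four_three : S 4 ((3:ℕ):ℤ) = 2 - 2*Complex.I := by
  unfold S
  rw [show Finset.Icc 1 4 = {1, 2, 3, 4} from by decide]
  rw [Finset.sum_insert (by decide), Finset.sum_insert (by decide),
    Finset.sum_insert (by decide), Finset.sum_singleton]
  rw [e_eq_of (_ * ((1:ℕ):ℝ)^2 / _) (3/4) 0 (by push_cast; norm_num)]
  rw [e_eq_of (_ * ((2:ℕ):ℝ)^2 / _) 0 3 (by push_cast; norm_num)]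
  rw [e_eq_of (_ * ((3:ℕ):ℝ)^2 / _) (3/4) 6 (by push_cast; norm_num)]
  rw [e_eq_of (_ * ((4:ℕ):ℝ)^2 / _) 0 12 (by push_cast; norm_num)]
  rw [e_34, e_zero]
  ring

lemma h64C : ((4:ℕ):ℂ) ^ (-(3:ℤ)) = 64⁻¹ := by push_cast; rw [zpow_neg]; norm_num
lemma hI2 : Complex.I^2 = -1 := Complex.I_sq

lemma A_four_1 (n : ℕ) (hc : n % 4 = 1) : A 4 n = 1/2 := by
  obtain ⟨m, hm⟩ : ∃ m, n = 4*m + 1 := ⟨n/4, by omega⟩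
  have hn : (n:ℝ) = 4*(m:ℝ) + 1 := by exact_mod_cast congrArg (Nat.cast : ℕ → ℝ) hm
  unfold A
  rw [show (Finset.Icc 1 4).filter (fun a => Nat.gcd a 4 = 1) = {1, 3} from by decide]
  rw [Finset.sum_insert (by decide), Finset.sum_singleton, S_four_one, S_four_three]
  rw [e_eq_of (-((n:ℝ) * ((1:ℕ):ℝ) / _)) (-(1/4)) (-(m:ℤ)) (by rw [hn]; push_cast; ring)]
  rw [e_eq_of (-((n:ℝ) * ((3:ℕ):ℝ) / _)) (-(3/4)) (-3*(m:ℤ)) (by rw [hn]; push_cast; ring)]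
  rw [e_m14, e_m34, h64C]
  linear_combination ((-1/2 : ℂ) - Complex.I^2/4) * hI2

lemma A_four_2 (n : ℕ) (hc : n % 4 = 2) : A 4 n = 1/2 := by
  obtain ⟨m, hm⟩ : ∃ m, n = 4*m + 2 := ⟨n/4, by omega⟩
  have hn : (n:ℝ) = 4*(m:ℝ) + 2 := by exact_mod_cast congrArg (Nat.cast : ℕ → ℝ) hm
  unfold A
  rw [show (Finset.Icc 1 4).filter (fun a => Nat.gcd a 4 = 1) = {1, 3} from by decide]
  rw [Finset.sum_insert (by decide), Finset.sum_singleton, S_four_one, S_four_three]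
  rw [e_eq_of (-((n:ℝ) * ((1:ℕ):ℝ) / _)) (-(1/2)) (-(m:ℤ)) (by rw [hn]; push_cast; ring)]
  rw [e_eq_of (-((n:ℝ) * ((3:ℕ):ℝ) / _)) (-(1/2)) (-3*(m:ℤ)-1) (by rw [hn]; push_cast; ring)]
  rw [e_m12, h64C]
  linear_combination (-3/4 : ℂ) * hI2

lemma A_four_3 (n : ℕ) (hc : n % 4 = 3) : A 4 n = -(1/2) := by
  obtain ⟨m, hm⟩ : ∃ m, n = 4*m + 3 := ⟨n/4, by omega⟩
  have hn : (n:ℝ) = 4*(m:ℝ) + 3 := by exact_mod_cast congrArg (Nat.cast : ℕ → ℝ) hm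
  unfold A
  rw [show (Finset.Icc 1 4).filter (fun a => Nat.gcd a 4 = 1) = {1, 3} from by decide]
  rw [Finset.sum_insert (by decide), Finset.sum_singleton, S_four_one, S_four_three]
  rw [e_eq_of (-((n:ℝ) * ((1:ℕ):ℝ) / _)) (-(3/4)) (-(m:ℤ)) (by rw [hn]; push_cast; ring)]
  rw [e_eq_of (-((n:ℝ) * ((3:ℕ):ℝ) / _)) (-(1/4)) (-3*(m:ℤ)-2) (by rw [hn]; push_cast; ring)]
  rw [e_m14, e_m34, h64C]
  linear_combination ((1/2 : ℂ) + Complex.I^2/4) * hI2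

lemma term_collapse (X Y : ℝ) :
    ((8:ℕ):ℂ)^(-(3:ℤ)) * ((4:ℂ)^3 * e X) * e Y = 8⁻¹ * e (X+Y) := by
  rw [e_add]
  have h8 : ((8:ℕ):ℂ)^(-(3:ℤ)) = 512⁻¹ := by push_cast; rw [zpow_neg]; norm_num
  rw [h8]
  ring

lemma S_eight (a : ℕ) (ha : a % 2 = 1) : S 8 ((a:ℕ):ℤ) = 4 * e ((a:ℝ)/8) := by
  unfold S
  rw [show Finset.Icc 1 8 = {1,2,3,4,5,6,7,8} from by decide]
  rw [Finset.sum_insert (by decide), Finset.sum_insert (by decide), Finset.sum_insert (by decide),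
    Finset.sum_insert (by decide), Finset.sum_insert (by decide), Finset.sum_insert (by decide),
    Finset.sum_insert (by decide), Finset.sum_singleton]
  rw [e_eq_of (_ * ((1:ℕ):ℝ)^2 / _) ((a:ℝ)/8) 0 (by push_cast; ring)]
  rw [e_eq_of (_ * ((2:ℕ):ℝ)^2 / _) ((a:ℝ)/2) 0 (by push_cast; ring)]
  rw [e_eq_of (_ * ((3:ℕ):ℝ)^2 / _) ((a:ℝ)/8) (a:ℤ) (by push_cast; ring)]
  rw [e_eq_of (_ * ((4:ℕ):ℝ)^2 / _) 0 (2*(a:ℤ)) (by push_cast; ring)]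
  rw [e_eq_of (_ * ((5:ℕ):ℝ)^2 / _) ((a:ℝ)/8) (3*(a:ℤ)) (by push_cast; ring)]
  rw [e_eq_of (_ * ((6:ℕ):ℝ)^2 / _) ((a:ℝ)/2) (4*(a:ℤ)) (by push_cast; ring)]
  rw [e_eq_of (_ * ((7:ℕ):ℝ)^2 / _) ((a:ℝ)/8) (6*(a:ℤ)) (by push_cast; ring)]
  rw [e_eq_of (_ * ((8:ℕ):ℝ)^2 / _) 0 (8*(a:ℤ)) (by push_cast; ring)]
  rw [e_half_odd a ha, e_zero]
  ring

lemma A_eight_1 (n : ℕ) (hc : n % 8 = 1) : A 8 n = 0 := by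
  obtain ⟨m, hm⟩ : ∃ m, n = 8*m + 1 := ⟨n/8, by omega⟩
  have hn : (n:ℝ) = 8*(m:ℝ) + 1 := by exact_mod_cast congrArg (Nat.cast : ℕ → ℝ) hm
  unfold A
  rw [show (Finset.Icc 1 8).filter (fun a => Nat.gcd a 8 = 1) = {1, 3, 5, 7} from by decide]
  rw [Finset.sum_insert (by decide), Finset.sum_insert (by decide),
    Finset.sum_insert (by decide), Finset.sum_singleton]
  rw [S_eight 1 (by norm_num), S_eight 3 (by norm_num), S_eight 5 (by norm_num),
    S_eight 7 (by norm_num)]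
  simp only [mul_pow, e_pow3, term_collapse]
  rw [e_eq_of (3 * _ + -(_ * ((1:ℕ):ℝ) / _)) (1/4) (-(m:ℤ)) (by rw [hn]; push_cast; ring)]
  rw [e_eq_of (3 * _ + -(_ * ((3:ℕ):ℝ) / _)) (3/4) (-3*(m:ℤ)) (by rw [hn]; push_cast; ring)]
  rw [e_eq_of (3 * _ + -(_ * ((5:ℕ):ℝ) / _)) (1/4) (-5*(m:ℤ)+1) (by rw [hn]; push_cast; ring)]
  rw [e_eq_of (3 * _ + -(_ * ((7:ℕ):ℝ) / _)) (3/4) (-7*(m:ℤ)+1) (by rw [hn]; push_cast; ring)]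
  rw [e_quarter, e_34]
  ring

lemma A_eight_2 (n : ℕ) (hc : n % 8 = 2) : A 8 n = 0 := by
  obtain ⟨m, hm⟩ : ∃ m, n = 8*m + 2 := ⟨n/8, by omega⟩
  have hn : (n:ℝ) = 8*(m:ℝ) + 2 := by exact_mod_cast congrArg (Nat.cast : ℕ → ℝ) hm
  unfold A
  rw [show (Finset.Icc 1 8).filter (fun a => Nat.gcd a 8 = 1) = {1, 3, 5, 7} from by decide]
  rw [Finset.sum_insert (by decide), Finset.sum_insert (by decide),
    Finset.sum_insert (by decide), Finset.sum_singleton]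
  rw [S_eight 1 (by norm_num), S_eight 3 (by norm_num), S_eight 5 (by norm_num),
    S_eight 7 (by norm_num)]
  simp only [mul_pow, e_pow3, term_collapse]
  rw [e_eq_of (3 * _ + -(_ * ((1:ℕ):ℝ) / _)) (1/8) (-(m:ℤ)) (by rw [hn]; push_cast; ring)]
  rw [e_eq_of (3 * _ + -(_ * ((3:ℕ):ℝ) / _)) (3/8) (-3*(m:ℤ)) (by rw [hn]; push_cast; ring)]
  rw [e_eq_of (3 * _ + -(_ * ((5:ℕ):ℝ) / _)) (1/8 + 1/2) (-5*(m:ℤ)) (by rw [hn]; push_cast; ring)]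
  rw [e_eq_of (3 * _ + -(_ * ((7:ℕ):ℝ) / _)) (3/8 + 1/2) (-7*(m:ℤ)) (by rw [hn]; push_cast; ring)]
  rw [e_add_half, e_add_half]
  ring

lemma A_eight_3 (n : ℕ) (hc : n % 8 = 3) : A 8 n = 1/2 := by
  obtain ⟨m, hm⟩ : ∃ m, n = 8*m + 3 := ⟨n/8, by omega⟩
  have hn : (n:ℝ) = 8*(m:ℝ) + 3 := by exact_mod_cast congrArg (Nat.cast : ℕ → ℝ) hm
  unfold A
  rw [show (Finset.Icc 1 8).filter (fun a => Nat.gcd a 8 = 1) = {1, 3, 5, 7} from by decide]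
  rw [Finset.sum_insert (by decide), Finset.sum_insert (by decide),
    Finset.sum_insert (by decide), Finset.sum_singleton]
  rw [S_eight 1 (by norm_num), S_eight 3 (by norm_num), S_eight 5 (by norm_num),
    S_eight 7 (by norm_num)]
  simp only [mul_pow, e_pow3, term_collapse]
  rw [e_eq_of (3 * _ + -(_ * ((1:ℕ):ℝ) / _)) 0 (-(m:ℤ)) (by rw [hn]; push_cast; ring)]
  rw [e_eq_of (3 * _ + -(_ * ((3:ℕ):ℝ) / _)) 0 (-3*(m:ℤ)) (by rw [hn]; push_cast; ring)]
  rw [e_eq_of (3 * _ + -(_ * ((5:ℕ):ℝ) / _)) 0 (-5*(m:ℤ)) (by rw [hn]; push_cast; ring)]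
  rw [e_eq_of (3 * _ + -(_ * ((7:ℕ):ℝ) / _)) 0 (-7*(m:ℤ)) (by rw [hn]; push_cast; ring)]
  rw [e_zero]
  norm_num

lemma A_eight_5 (n : ℕ) (hc : n % 8 = 5) : A 8 n = 0 := by
  obtain ⟨m, hm⟩ : ∃ m, n = 8*m + 5 := ⟨n/8, by omega⟩
  have hn : (n:ℝ) = 8*(m:ℝ) + 5 := by exact_mod_cast congrArg (Nat.cast : ℕ → ℝ) hm
  unfold A
  rw [show (Finset.Icc 1 8).filter (fun a => Nat.gcd a 8 = 1) = {1, 3, 5, 7} from by decide]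
  rw [Finset.sum_insert (by decide), Finset.sum_insert (by decide),
    Finset.sum_insert (by decide), Finset.sum_singleton]
  rw [S_eight 1 (by norm_num), S_eight 3 (by norm_num), S_eight 5 (by norm_num),
    S_eight 7 (by norm_num)]
  simp only [mul_pow, e_pow3, term_collapse]
  rw [e_eq_of (3 * _ + -(_ * ((1:ℕ):ℝ) / _)) (-(1/4)) (-(m:ℤ)) (by rw [hn]; push_cast; ring)]
  rw [e_eq_of (3 * _ + -(_ * ((3:ℕ):ℝ) / _)) (-(3/4)) (-3*(m:ℤ)) (by rw [hn]; push_cast; ring)]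
  rw [e_eq_of (3 * _ + -(_ * ((5:ℕ):ℝ) / _)) (-(1/4)) (-5*(m:ℤ)-1) (by rw [hn]; push_cast; ring)]
  rw [e_eq_of (3 * _ + -(_ * ((7:ℕ):ℝ) / _)) (-(3/4)) (-7*(m:ℤ)-1) (by rw [hn]; push_cast; ring)]
  rw [e_m14, e_m34]
  ring

lemma A_eight_6 (n : ℕ) (hc : n % 8 = 6) : A 8 n = 0 := by
  obtain ⟨m, hm⟩ : ∃ m, n = 8*m + 6 := ⟨n/8, by omega⟩
  have hn : (n:ℝ) = 8*(m:ℝ) + 6 := by exact_mod_cast congrArg (Nat.cast : ℕ → ℝ) hm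
  unfold A
  rw [show (Finset.Icc 1 8).filter (fun a => Nat.gcd a 8 = 1) = {1, 3, 5, 7} from by decide]
  rw [Finset.sum_insert (by decide), Finset.sum_insert (by decide),
    Finset.sum_insert (by decide), Finset.sum_singleton]
  rw [S_eight 1 (by norm_num), S_eight 3 (by norm_num), S_eight 5 (by norm_num),
    S_eight 7 (by norm_num)]
  simp only [mul_pow, e_pow3, term_collapse]
  rw [e_eq_of (3 * _ + -(_ * ((1:ℕ):ℝ) / _)) (-(3/8)) (-(m:ℤ)) (by rw [hn]; push_cast; ring)]
  rw [e_eq_of (3 * _ + -(_ * ((3:ℕ):ℝ) / _)) (-(1/8)) (-3*(m:ℤ)-1) (by rw [hn]; push_cast; ring)]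
  rw [e_eq_of (3 * _ + -(_ * ((5:ℕ):ℝ) / _)) (-(3/8) + 1/2) (-5*(m:ℤ)-2) (by rw [hn]; push_cast; ring)]
  rw [e_eq_of (3 * _ + -(_ * ((7:ℕ):ℝ) / _)) (-(1/8) + 1/2) (-7*(m:ℤ)-3) (by rw [hn]; push_cast; ring)]
  rw [e_add_half, e_add_half]
  ring

/-! ### Main theorem -/

theorem two_adic_partial_sum_lower_bound (n : ℕ) (h4 : ¬ 4 ∣ n) (h8 : n % 8 ≠ 7)
    (H : ℕ) (hH : 3 ≤ H) :
    ∃ r : ℝ, (∑ h ∈ Finset.range (H + 1), A (2 ^ h) n) = (r : ℂ) ∧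
      (2 : ℝ) ^ (-(6 : ℤ)) ≤ r := by
  obtain ⟨d, hd⟩ : ∃ d, H + 1 = 4 + d := ⟨H - 3, by omega⟩
  have hsum : ∑ h ∈ Finset.range (H + 1), A (2 ^ h) n
      = A 1 n + A 2 n + A 4 n + A 8 n := by
    rw [hd, Finset.sum_range_add]
    have h2 : ∑ x ∈ Finset.range d, A (2^(4+x)) n = 0 :=
      Finset.sum_eq_zero (fun x _ => by
        rw [show 4 + x = x + 4 by omega]
        exact A_vanish x n h4)
    rw [h2, add_zero]
    rw [Finset.sum_range_succ, Finset.sum_range_succ, Finset.sum_range_succ,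
      Finset.sum_range_one]
    norm_num
  have hb : (2:ℝ)^(-(6:ℤ)) = 64⁻¹ := by rw [zpow_neg]; norm_num
  have hn4 : n % 4 ≠ 0 := fun h => h4 (Nat.dvd_of_mod_eq_zero h)
  have hmod : n % 8 = 1 ∨ n % 8 = 2 ∨ n % 8 = 3 ∨ n % 8 = 5 ∨ n % 8 = 6 := by omega
  rcases hmod with hc | hc | hc | hc | hc
  · refine ⟨3/2, ?_, by rw [hb]; norm_num⟩
    rw [hsum, A_one, A_two, A_four_1 n (by omega), A_eight_1 n hc]
    norm_num
  · refine ⟨3/2, ?_, by rw [hb]; norm_num⟩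
    rw [hsum, A_one, A_two, A_four_2 n (by omega), A_eight_2 n hc]
    norm_num
  · refine ⟨1, ?_, by rw [hb]; norm_num⟩
    rw [hsum, A_one, A_two, A_four_3 n (by omega), A_eight_3 n hc]
    norm_num
  · refine ⟨3/2, ?_, by rw [hb]; norm_num⟩
    rw [hsum, A_one, A_two, A_four_1 n (by omega), A_eight_5 n hc]
    norm_num
  · refine ⟨3/2, ?_, by rw [hb]; norm_num⟩
    rw [hsum, A_one, A_two, A_four_2 n (by omega), A_eight_6 n hc]
    norm_num
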